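/- Fix n, u, c : ℕ and e := u + c. Let N a : Matrix (Fin e) (Fin u) ℝ and C a : Matrix (Fin c) (Fin e) ℝ, for a ∈ Fin (n+1), be constant matrices satisfying (C a) * (N b) + (C b) * (N a) = 0 for all a, b, and let h : Matrix (Fin u) (Fin e) ℝ, hΓ : Matrix (Fin e) (Fin c) ℝ satisfy h * (N 0) = 1, (N 0) * h + hΓ * (C 0) = 1, and (C 0) * hΓ = 1. For every twice continuously differentiable φ : (Fin (n+1) → ℝ) → (Fin u → ℝ), define E x := ∑ b, (N b).mulVec (∂_b φ x), the evolution residual e x := h.mulVec (E x), and the constraints ψ x := (C 0).mulVec (E x). Then the off-shell subsidiary identity holds at every x: ∂_0 ψ x + ∑ i ∈ Finset.univ \ {0}, ((C i) * hΓ).mulVec (∂_i ψ x) = - ∑ a, ((C a) * (N 0)).mulVec (∂_a e x). -/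

import Mathlib

open Matrix

lemma fderiv_mulVec' {m k p : ℕ} (M : Matrix (Fin m) (Fin k) ℝ)
    (f : (Fin p → ℝ) → (Fin k → ℝ)) (x v : Fin p → ℝ)
    (hf : DifferentiableAt ℝ f x) :
    fderiv ℝ (fun y => M.mulVec (f y)) x v = M.mulVec (fderiv ℝ f x v) := by
  have hL : HasFDerivAt (fun y => M.mulVec (f y))
      ((M.mulVecLin.toContinuousLinearMap).comp (fderiv ℝ f x)) x :=
    (M.mulVecLin.toContinuousLinearMap.hasFDerivAt).comp x hf.hasFDerivAt
  rw [hL.fderiv]; rfl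

/-- Constant-coefficient off-shell subsidiary identity: the time derivative of the
constraints equals spatial derivatives of the constraints plus terms proportional to
derivatives of the evolution equations. -/
theorem stmt_4 (n u c : ℕ)
    (N : Fin (n + 1) → Matrix (Fin (u + c)) (Fin u) ℝ)
    (C : Fin (n + 1) → Matrix (Fin c) (Fin (u + c)) ℝ)
    (hGeroch : ∀ a b, C a * N b + C b * N a = 0)
    (h : Matrix (Fin u) (Fin (u + c)) ℝ)
    (hΓ : Matrix (Fin (u + c)) (Fin c) ℝ)
    (hhN : h * N 0 = 1)
    (hinv : N 0 * h + hΓ * C 0 = 1)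
    (hCh : C 0 * hΓ = 1)
    (φ : (Fin (n + 1) → ℝ) → (Fin u → ℝ))
    (hφ : ContDiff ℝ 2 φ)
    (E : (Fin (n + 1) → ℝ) → (Fin (u + c) → ℝ))
    (hE : ∀ x, E x = ∑ b, (N b).mulVec (fderiv ℝ φ x (Pi.single b 1)))
    (ev : (Fin (n + 1) → ℝ) → (Fin u → ℝ))
    (hev : ∀ x, ev x = h.mulVec (E x))
    (ψ : (Fin (n + 1) → ℝ) → (Fin c → ℝ))
    (hψ : ∀ x, ψ x = (C 0).mulVec (E x)) :
    ∀ x, fderiv ℝ ψ x (Pi.single 0 1)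
        + ∑ i ∈ Finset.univ \ {0}, (C i * hΓ).mulVec (fderiv ℝ ψ x (Pi.single i 1))
      = - ∑ a, (C a * N 0).mulVec (fderiv ℝ ev x (Pi.single a 1)) := by
  intro x
  -- differentiability facts
  have hφ1 : Differentiable ℝ φ := hφ.differentiable (by norm_num)
  have hd2 : Differentiable ℝ (fderiv ℝ φ) :=
    (hφ.fderiv_right (m := 1) (by norm_num)).differentiable (by norm_num)
  -- the directional derivative functions
  set P : Fin (n + 1) → (Fin (n + 1) → ℝ) → (Fin u → ℝ) :=
    fun b y => fderiv ℝ φ y (Pi.single b 1) with hP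
  have hPdiff : ∀ b, Differentiable ℝ (P b) := fun b =>
    hd2.clm_apply (differentiable_const _)
  -- second derivatives
  set D : Fin (n + 1) → Fin (n + 1) → (Fin u → ℝ) :=
    fun a b => fderiv ℝ (fderiv ℝ φ) x (Pi.single a 1) (Pi.single b 1) with hD
  have hPderiv : ∀ a b, fderiv ℝ (P a) x (Pi.single b 1) = D b a := by
    intro a b
    have hc := ((ContinuousLinearMap.apply ℝ (Fin u → ℝ)
        (Pi.single a 1)).hasFDerivAt (x := fderiv ℝ φ x)).comp x (hd2 x).hasFDerivAt
    rw [show P a = ⇑(ContinuousLinearMap.apply ℝ (Fin u → ℝ) (Pi.single a 1)) ∘ fderiv ℝ φ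
      from rfl, hc.fderiv]; rfl
  have hDsymm : ∀ a b, D a b = D b a := fun a b =>
    (hφ.contDiffAt.isSymmSndFDerivAt (by simp [minSmoothness_of_isRCLikeNormedField])) _ _
  -- rewrite E, ψ, ev as explicit functions
  have hEfun : E = fun y => ∑ b, (N b).mulVec (P b y) := funext hE
  have hGdiff : Differentiable ℝ (fun y => ∑ b, (N b).mulVec (P b y)) := by
    apply Differentiable.fun_sum
    intro b _
    exact ((N b).mulVecLin.toContinuousLinearMap.differentiable).comp (hPdiff b)
  have hEdiff : Differentiable ℝ E := hEfun ▸ hGdiff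
  -- derivative of E
  have key : ∀ a : Fin (n + 1),
      fderiv ℝ E x (Pi.single a 1) = ∑ b, (N b).mulVec (D a b) := by
    intro a
    rw [hEfun]
    have : fderiv ℝ (fun y => ∑ b, (N b).mulVec (P b y)) x
        = ∑ b, fderiv ℝ (fun y => (N b).mulVec (P b y)) x := by
      apply fderiv_fun_sum
      intro b _
      exact (((N b).mulVecLin.toContinuousLinearMap.differentiable).comp
        (hPdiff b)).differentiableAt
    rw [this, ContinuousLinearMap.sum_apply]
    refine Finset.sum_congr rfl fun b _ => ?_
    rw [fderiv_mulVec' (N b) (P b) x _ (hPdiff b).differentiableAt, hPderiv]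
  -- derivatives of ψ and ev
  have hψfun : ψ = fun y => (C 0).mulVec (E y) := funext hψ
  have hevfun : ev = fun y => h.mulVec (E y) := funext hev
  have hψd : ∀ a : Fin (n + 1), fderiv ℝ ψ x (Pi.single a 1)
      = (C 0).mulVec (∑ b, (N b).mulVec (D a b)) := by
    intro a
    rw [hψfun, fderiv_mulVec' (C 0) E x _ hEdiff.differentiableAt, key]
  have hevd : ∀ a : Fin (n + 1), fderiv ℝ ev x (Pi.single a 1)
      = h.mulVec (∑ b, (N b).mulVec (D a b)) := by
    intro a
    rw [hevfun, fderiv_mulVec' h E x _ hEdiff.differentiableAt, key]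
  simp only [hψd, hevd]
  -- now pure linear algebra
  set w : Fin (n + 1) → (Fin (u + c) → ℝ) := fun a => ∑ b, (N b).mulVec (D a b) with hw
  -- key cancellation: ∑ a, (C a).mulVec (w a) = 0
  have hzero : ∑ a, (C a).mulVec (w a) = 0 := by
    have hS : ∑ a, (C a).mulVec (w a)
        = ∑ a, ∑ b, (C a * N b).mulVec (D a b) := by
      refine Finset.sum_congr rfl fun a _ => ?_
      rw [hw]
      rw [show (C a).mulVec (∑ b, (N b).mulVec (D a b))
          = ∑ b, (C a).mulVec ((N b).mulVec (D a b)) from map_sum (C a).mulVecLin _ _]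
      exact Finset.sum_congr rfl fun b _ => by rw [mulVec_mulVec]
    have h2 : (∑ a, (C a).mulVec (w a)) + (∑ a, (C a).mulVec (w a)) = 0 := by
      rw [hS]
      nth_rewrite 2 [Finset.sum_comm]
      rw [← Finset.sum_add_distrib]
      refine Finset.sum_eq_zero fun a _ => ?_
      rw [← Finset.sum_add_distrib]
      refine Finset.sum_eq_zero fun b _ => ?_
      rw [hDsymm b a, ← add_mulVec, hGeroch a b, zero_mulVec]
    have h2' : (2 : ℝ) • (∑ a, (C a).mulVec (w a)) = 0 := by rw [two_smul]; exact h2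
    exact (smul_eq_zero.mp h2').resolve_left two_ne_zero
  -- rewrite RHS using hinv
  have hNh : ∀ a : Fin (n + 1), C a * N 0 * h = C a - C a * hΓ * C 0 := by
    intro a
    have hsub : N 0 * h = 1 - hΓ * C 0 := eq_sub_of_add_eq hinv
    rw [Matrix.mul_assoc, hsub, Matrix.mul_sub, Matrix.mul_one, Matrix.mul_assoc]
  have hRHS : ∀ a : Fin (n + 1), (C a * N 0).mulVec (h.mulVec (w a))
      = (C a).mulVec (w a) - (C a * hΓ * C 0).mulVec (w a) := by
    intro a
    rw [mulVec_mulVec, hNh a, Matrix.sub_mulVec]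
  have hLHSi : ∀ a : Fin (n + 1), (C a * hΓ).mulVec ((C 0).mulVec (w a))
      = (C a * hΓ * C 0).mulVec (w a) := fun a => by rw [mulVec_mulVec]
  simp only [hw] at hRHS hLHSi hzero
  simp only [hRHS, hLHSi]
  rw [Finset.sum_sub_distrib, neg_sub, hzero, sub_zero]
  change C 0 *ᵥ (∑ b, (N b).mulVec (D 0 b)) + ∑ x ∈ Finset.univ \ {0}, (C x * hΓ * C 0) *ᵥ w x
    = ∑ x, (C x * hΓ * C 0) *ᵥ w x
  have h0 : C 0 *ᵥ (∑ b, (N b).mulVec (D 0 b)) = (C 0 * hΓ * C 0) *ᵥ w 0 := by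
    rw [hCh, Matrix.one_mul]
  rw [h0]
  rw [show (Finset.univ : Finset (Fin (n + 1))) = insert 0 (Finset.univ \ {0}) by
    ext i; simp [Finset.mem_insert, em]]
  rw [Finset.sum_insert (by simp)]
  congr 1
  refine Finset.sum_congr ?_ fun _ _ => rfl
  ext i
  simp only [Finset.mem_sdiff, Finset.mem_insert, Finset.mem_singleton, Finset.mem_univ,
    true_and]
  tauto
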